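/- Fix integers q ≥ 2, r ≥ 2 and β > 0. For z ∈ P with z ≠ z_β let z(t) = (1−t)z_β + t z for t ∈ [0,1], and define the weighted inner product h(t) = ⟨z − z_β, g^r(z(t))⟩_ρ := Σ_{j=1}^q g_j^r(z(t)) (z_j − 1/q) ((1−t)/q + t z_j)^{r−2}. Then h(0) = 0 and h is strictly increasing on [0,1) (its derivative is bounded below by β(r−1) times a variance with respect to the weights g^r(z(t)), which is strictly positive). -/

import Mathlib

noncomputable section

/-- The probability simplex in `ℝ^q`. -/
def simplexP (q : ℕ) : Set (Fin q → ℝ) :=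
  {ν | (∀ k, 0 ≤ ν k) ∧ ∑ k, ν k = 1}

/-- `g_k^r(z) = e^{β z_k^{r−1}} / Σ_j e^{β z_j^{r−1}}` for the generalized
Curie–Weiss–Potts model. -/
def gGCWP (q r : ℕ) (β : ℝ) (z : Fin q → ℝ) (k : Fin q) : ℝ :=
  Real.exp (β * z k ^ (r - 1)) / ∑ j : Fin q, Real.exp (β * z j ^ (r - 1))

/-- The equidistributed (single-phase equilibrium) point `z_β = (1/q,…,1/q)`. -/
def zUnif (q : ℕ) : Fin q → ℝ := fun _ => 1 / (q : ℝ)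

/-- The weighted inner product
`h(t) = ⟨z − z_β, g^r(z(t))⟩_ρ = Σ_j g_j^r(z(t)) (z_j − 1/q) ((1−t)/q + t z_j)^{r−2}`
along the straight line `z(t) = (1−t)z_β + tz`. -/
def wInner (q r : ℕ) (β : ℝ) (z : Fin q → ℝ) (t : ℝ) : ℝ :=
  ∑ j : Fin q, gGCWP q r β ((1 - t) • zUnif q + t • z) j *
    (z j - 1 / (q : ℝ)) * ((1 - t) / (q : ℝ) + t * z j) ^ (r - 2)

/-- Strict Cauchy–Schwarz / positive variance for positive weights. -/
lemma var_lt' {ι : Type*} (s : Finset ι) (E X : ι → ℝ) (hE : ∀ i ∈ s, 0 < E i)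
    {j k : ι} (hj : j ∈ s) (hk : k ∈ s) (hjk : X j ≠ X k) :
    (∑ i ∈ s, E i * X i) ^ 2 < (∑ i ∈ s, E i * X i ^ 2) * (∑ i ∈ s, E i) := by
  have key : 2 * ((∑ i ∈ s, E i * X i ^ 2) * (∑ i ∈ s, E i) - (∑ i ∈ s, E i * X i) ^ 2)
      = ∑ p ∈ s ×ˢ s, E p.1 * E p.2 * (X p.1 - X p.2) ^ 2 := by
    rw [Finset.sum_product]
    have h1 : ∀ a ∈ s, ∑ b ∈ s, E a * E b * (X a - X b) ^ 2
        = E a * X a ^ 2 * (∑ b ∈ s, E b) - 2 * ((E a * X a) * (∑ b ∈ s, E b * X b))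
          + E a * (∑ b ∈ s, E b * X b ^ 2) := by
      intro a _
      rw [Finset.mul_sum, Finset.mul_sum, Finset.mul_sum, Finset.mul_sum]
      rw [← Finset.sum_sub_distrib, ← Finset.sum_add_distrib]
      exact Finset.sum_congr rfl fun b _ => by ring
    rw [Finset.sum_congr rfl h1, Finset.sum_add_distrib, Finset.sum_sub_distrib,
      ← Finset.sum_mul, ← Finset.mul_sum, ← Finset.sum_mul, ← Finset.sum_mul]
    ring
  have hpos : 0 < ∑ p ∈ s ×ˢ s, E p.1 * E p.2 * (X p.1 - X p.2) ^ 2 := by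
    refine Finset.sum_pos' (fun p hp => ?_) ⟨(j, k), Finset.mk_mem_product hj hk, ?_⟩
    · have := hE p.1 (Finset.mem_product.1 hp).1
      have := hE p.2 (Finset.mem_product.1 hp).2
      positivity
    · have h1 := hE j hj
      have h2 := hE k hk
      have h3 : 0 < (X j - X k) ^ 2 :=
        lt_of_le_of_ne (sq_nonneg _) (Ne.symm (pow_ne_zero 2 (sub_ne_zero.mpr hjk)))
      exact mul_pos (mul_pos h1 h2) h3
  linarith

def auxW (q : ℕ) (z : Fin q → ℝ) (j : Fin q) (s : ℝ) : ℝ := (1 - s) / (q : ℝ) + s * z j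

def auxE (q r : ℕ) (β : ℝ) (z : Fin q → ℝ) (j : Fin q) (s : ℝ) : ℝ :=
  Real.exp (β * auxW q z j s ^ (r - 1))

def auxD (q : ℕ) (z : Fin q → ℝ) (j : Fin q) : ℝ := z j - 1 / (q : ℝ)

def auxN (q r : ℕ) (β : ℝ) (z : Fin q → ℝ) (s : ℝ) : ℝ :=
  ∑ j, auxE q r β z j s * (auxD q z j * auxW q z j s ^ (r - 2))

def auxZ (q r : ℕ) (β : ℝ) (z : Fin q → ℝ) (s : ℝ) : ℝ := ∑ j, auxE q r β z j s

def auxN' (q r : ℕ) (β : ℝ) (z : Fin q → ℝ) (s : ℝ) : ℝ :=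
  ∑ j, (auxE q r β z j s * (β * (↑(r - 1) * auxW q z j s ^ (r - 1 - 1) * auxD q z j)) *
        (auxD q z j * auxW q z j s ^ (r - 2))
      + auxE q r β z j s * (auxD q z j * (↑(r - 2) * auxW q z j s ^ (r - 2 - 1) * auxD q z j)))

def auxZ' (q r : ℕ) (β : ℝ) (z : Fin q → ℝ) (s : ℝ) : ℝ :=
  ∑ j, auxE q r β z j s * (β * (↑(r - 1) * auxW q z j s ^ (r - 1 - 1) * auxD q z j))

lemma auxW_hasDeriv (q : ℕ) (z : Fin q → ℝ) (j : Fin q) (s : ℝ) :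
    HasDerivAt (auxW q z j) (auxD q z j) s := by
  have h : HasDerivAt (fun u : ℝ => (1 - u) / (q : ℝ) + u * z j) ((0 - 1) / (q : ℝ) + 1 * z j) s :=
    (((hasDerivAt_const s (1 : ℝ)).sub (hasDerivAt_id s)).div_const _).add
      ((hasDerivAt_id s).mul_const _)
  convert h using 1
  · rfl
  unfold auxD; ring

lemma auxE_hasDeriv (q r : ℕ) (β : ℝ) (z : Fin q → ℝ) (j : Fin q) (s : ℝ) :
    HasDerivAt (auxE q r β z j)
      (auxE q r β z j s * (β * (↑(r - 1) * auxW q z j s ^ (r - 1 - 1) * auxD q z j))) s :=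
  (((auxW_hasDeriv q z j s).pow (r - 1)).const_mul β).exp

lemma auxN_hasDeriv (q r : ℕ) (β : ℝ) (z : Fin q → ℝ) (s : ℝ) :
    HasDerivAt (auxN q r β z) (auxN' q r β z s) s :=
  HasDerivAt.fun_sum fun j _ =>
    (auxE_hasDeriv q r β z j s).mul (((auxW_hasDeriv q z j s).pow (r - 2)).const_mul (auxD q z j))

lemma auxZ_hasDeriv (q r : ℕ) (β : ℝ) (z : Fin q → ℝ) (s : ℝ) :
    HasDerivAt (auxZ q r β z) (auxZ' q r β z s) s :=
  HasDerivAt.fun_sum fun j _ => auxE_hasDeriv q r β z j s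

lemma auxZ_pos (q r : ℕ) (hq : 0 < q) (β : ℝ) (z : Fin q → ℝ) (s : ℝ) :
    0 < auxZ q r β z s := by
  have : Nonempty (Fin q) := Fin.pos_iff_nonempty.mp hq
  exact Finset.sum_pos (fun j _ => Real.exp_pos _) Finset.univ_nonempty

lemma wInner_eq_div (q r : ℕ) (β : ℝ) (z : Fin q → ℝ) (t : ℝ) :
    wInner q r β z t = auxN q r β z t / auxZ q r β z t := by
  unfold wInner auxN auxZ auxE auxW auxD gGCWP
  have hpt : ∀ i : Fin q, ((1 - t) • zUnif q + t • z) i = (1 - t) / (q : ℝ) + t * z i := by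
    intro i
    simp only [Pi.add_apply, Pi.smul_apply, zUnif, smul_eq_mul]
    ring
  simp_rw [hpt]
  rw [Finset.sum_div]
  exact Finset.sum_congr rfl fun j _ => by
    rw [div_mul_eq_mul_div, div_mul_eq_mul_div, mul_assoc]

lemma wInner_hasDeriv (q r : ℕ) (hq : 0 < q) (β : ℝ) (z : Fin q → ℝ) (t : ℝ) :
    HasDerivAt (wInner q r β z)
      ((auxN' q r β z t * auxZ q r β z t - auxN q r β z t * auxZ' q r β z t)
        / auxZ q r β z t ^ 2) t := by
  have heq : wInner q r β z = fun s => auxN q r β z s / auxZ q r β z s :=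
    funext fun s => wInner_eq_div q r β z s
  rw [heq]
  exact (auxN_hasDeriv q r β z t).div (auxZ_hasDeriv q r β z t)
    (ne_of_gt (auxZ_pos q r hq β z t))

lemma sum_auxD_eq_zero (q : ℕ) (hq : 0 < q) (z : Fin q → ℝ) (hz : z ∈ simplexP q) :
    ∑ j, auxD q z j = 0 := by
  have hq0 : (q : ℝ) ≠ 0 := Nat.cast_ne_zero.mpr (Nat.pos_iff_ne_zero.mp hq)
  have h1 : ∑ _j : Fin q, (1 : ℝ) / q = 1 := by
    rw [Finset.sum_const, Finset.card_univ, Fintype.card_fin, nsmul_eq_mul]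
    field_simp
  unfold auxD
  rw [Finset.sum_sub_distrib, hz.2, h1, sub_self]

/-- **Monotonicity of the weighted inner product** (proof of Lemma 7.3 in the
survey).  For `z ∈ P`, `z ≠ z_β`, the function
`h(t) = ⟨z − z_β, g^r(z(t))⟩_ρ` satisfies `h(0) = 0` and is strictly increasing
on `[0,1)`. -/
theorem gcwp_weighted_inner_increasing (q r : ℕ) (hq : 2 ≤ q) (hr : 2 ≤ r)
    (β : ℝ) (hβ : 0 < β) (z : Fin q → ℝ) (hz : z ∈ simplexP q) (hne : z ≠ zUnif q) :
    wInner q r β z 0 = 0 ∧ StrictMonoOn (wInner q r β z) (Set.Ico (0 : ℝ) 1) := by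
  have hq0 : 0 < q := by omega
  have hqR : (0 : ℝ) < q := Nat.cast_pos.mpr hq0
  -- existence of positive and negative deviations
  have hd0 : ∑ j, auxD q z j = 0 := sum_auxD_eq_zero q hq0 z hz
  have hdne : ∃ j, auxD q z j ≠ 0 := by
    by_contra h
    push_neg at h
    apply hne
    funext j
    have := h j
    unfold auxD at this
    have : z j = 1 / (q : ℝ) := by linarith [sub_eq_zero.mp this]
    simpa [zUnif] using this
  obtain ⟨j0, hj0⟩ := hdne
  have hex : (∃ j, 0 < auxD q z j) ∧ (∃ j, auxD q z j < 0) := by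
    constructor
    · by_contra h
      push_neg at h
      have hlt : ∑ j, auxD q z j < ∑ _j : Fin q, (0 : ℝ) := by
        refine Finset.sum_lt_sum (fun i _ => h i) ⟨j0, Finset.mem_univ _, ?_⟩
        exact lt_of_le_of_ne (h j0) hj0
      simp only [Finset.sum_const, smul_zero] at hlt
      linarith
    · by_contra h
      push_neg at h
      have hlt : ∑ _j : Fin q, (0 : ℝ) < ∑ j, auxD q z j := by
        refine Finset.sum_lt_sum (fun i _ => h i) ⟨j0, Finset.mem_univ _, ?_⟩
        exact lt_of_le_of_ne (h j0) (Ne.symm hj0)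
      simp only [Finset.sum_const, smul_zero] at hlt
      linarith
  obtain ⟨⟨jp, hjp⟩, ⟨jn, hjn⟩⟩ := hex
  constructor
  · -- wInner 0 = 0
    rw [wInner_eq_div]
    have hN0 : auxN q r β z 0 = 0 := by
      unfold auxN auxE auxW
      have h1 : ∀ j : Fin q,
          Real.exp (β * ((1 - 0) / (q : ℝ) + 0 * z j) ^ (r - 1)) *
            (auxD q z j * ((1 - 0) / (q : ℝ) + 0 * z j) ^ (r - 2))
          = (Real.exp (β * ((1 : ℝ) / q) ^ (r - 1)) * ((1 : ℝ) / q) ^ (r - 2)) * auxD q z j := by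
        intro j
        norm_num
        ring
      rw [Finset.sum_congr rfl fun j _ => h1 j, ← Finset.mul_sum, hd0, mul_zero]
    rw [hN0, zero_div]
  · -- strict monotonicity
    refine strictMonoOn_of_deriv_pos (convex_Ico 0 1) ?_ ?_
    · exact Continuous.continuousOn (continuous_iff_continuousAt.mpr fun s =>
        (wInner_hasDeriv q r hq0 β z s).continuousAt)
    · rw [interior_Ico]
      intro t ht
      rw [(wInner_hasDeriv q r hq0 β z t).deriv]
      have hZpos := auxZ_pos q r hq0 β z t
      refine div_pos ?_ (pow_pos hZpos 2)
      -- all coordinates of z(t) are positive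
      have hW : ∀ j, 0 < auxW q z j t := by
        intro j
        unfold auxW
        have h1 : 0 < (1 - t) / (q : ℝ) := div_pos (by linarith [ht.2]) hqR
        have h2 : 0 ≤ t * z j := mul_nonneg ht.1.le (hz.1 j)
        linarith
      have hrr : r - 1 - 1 = r - 2 := by omega
      -- variance inequality
      have hvar : (∑ j, auxE q r β z j t * (auxD q z j * auxW q z j t ^ (r - 2))) ^ 2
          < (∑ j, auxE q r β z j t * (auxD q z j * auxW q z j t ^ (r - 2)) ^ 2) *
            (∑ j, auxE q r β z j t) := by
        have hXp : 0 < auxD q z jp * auxW q z jp t ^ (r - 2) :=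
          mul_pos hjp (pow_pos (hW jp) _)
        have hXn : auxD q z jn * auxW q z jn t ^ (r - 2) < 0 :=
          mul_neg_of_neg_of_pos hjn (pow_pos (hW jn) _)
        exact var_lt' Finset.univ (fun j => auxE q r β z j t)
          (fun j => auxD q z j * auxW q z j t ^ (r - 2))
          (fun i _ => Real.exp_pos _) (Finset.mem_univ jp) (Finset.mem_univ jn)
          (ne_of_gt (lt_trans hXn hXp))
      have hA : auxN' q r β z t
          = β * ↑(r - 1) * (∑ j, auxE q r β z j t * (auxD q z j * auxW q z j t ^ (r - 2)) ^ 2)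
            + ↑(r - 2) * (∑ j, auxE q r β z j t * (auxD q z j ^ 2 * auxW q z j t ^ (r - 2 - 1))) := by
        unfold auxN'
        rw [hrr, Finset.mul_sum, Finset.mul_sum, ← Finset.sum_add_distrib]
        exact Finset.sum_congr rfl fun j _ => by ring
      have hZ'eq : auxZ' q r β z t = β * ↑(r - 1) * auxN q r β z t := by
        unfold auxZ' auxN
        rw [hrr, Finset.mul_sum]
        exact Finset.sum_congr rfl fun j _ => by ring
      have hB : 0 ≤ ∑ j, auxE q r β z j t * (auxD q z j ^ 2 * auxW q z j t ^ (r - 2 - 1)) := by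
        refine Finset.sum_nonneg fun j _ => ?_
        have h1 : (0 : ℝ) < auxE q r β z j t := Real.exp_pos _
        have h2 : 0 ≤ auxW q z j t ^ (r - 2 - 1) := pow_nonneg (hW j).le _
        positivity
      have hc1 : (0 : ℝ) < ↑(r - 1) := by
        have : 0 < r - 1 := by omega
        exact_mod_cast this
      have hc2 : (0 : ℝ) ≤ (↑(r - 2) : ℝ) := Nat.cast_nonneg _
      rw [hA, hZ'eq]
      unfold auxN auxZ at *
      set A := ∑ j, auxE q r β z j t * (auxD q z j * auxW q z j t ^ (r - 2)) ^ 2 with hAdef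
      set Nn := ∑ j, auxE q r β z j t * (auxD q z j * auxW q z j t ^ (r - 2)) with hNdef
      set Zz := ∑ j, auxE q r β z j t with hZdef
      set B := ∑ j, auxE q r β z j t * (auxD q z j ^ 2 * auxW q z j t ^ (r - 2 - 1)) with hBdef
      have k1 : β * ↑(r - 1) * Nn ^ 2 < β * ↑(r - 1) * (A * Zz) :=
        mul_lt_mul_of_pos_left hvar (mul_pos hβ hc1)
      have k2 : 0 ≤ (↑(r - 2) : ℝ) * B * Zz :=
        mul_nonneg (mul_nonneg hc2 hB) hZpos.le
      nlinarith [k1, k2]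


end
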